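/- For every integer n ≥ 0, 0<|q|<1, and y not of the form -q^{-m} (m ≥ 0) nor ±q^{-m}: ∑_{k=0}^n q^k (yq^n;q)_k / (q²;q²)_k = (-y;q)_n · ∑_{k=0}^n q^k (y/q;q)_{2k} / ((q²;q²)_k (y²;q²)_k). -/

import Mathlib

noncomputable def qPoch (a q : ℂ) (n : ℕ) : ℂ := ∏ i ∈ Finset.range n, (1 - a * q ^ i)

noncomputable def qPochInf (a q : ℂ) : ℂ := ∏' i : ℕ, (1 - a * q ^ i)

noncomputable def qBinom (q : ℂ) (m k : ℕ) : ℂ :=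
  if k ≤ m then qPoch q q m / (qPoch q q k * qPoch q q (m - k)) else 0

lemma qPoch_zero (a q : ℂ) : qPoch a q 0 = 1 := by simp [qPoch]

lemma qPoch_succ (a q : ℂ) (n : ℕ) : qPoch a q (n+1) = qPoch a q n * (1 - a * q ^ n) :=
  Finset.prod_range_succ _ _

lemma qPoch_succ' (a q : ℂ) (n : ℕ) : qPoch a q (n+1) = (1 - a) * qPoch (a*q) q n := by
  unfold qPoch
  rw [Finset.prod_range_succ']
  simp only [pow_zero, mul_one]
  rw [mul_comm]
  congr 1
  apply Finset.prod_congr rfl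
  intro i _
  ring

lemma qPoch_add (a q : ℂ) (m l : ℕ) :
    qPoch a q (m+l) = qPoch a q m * qPoch (a * q ^ m) q l := by
  unfold qPoch
  rw [Finset.prod_range_add]
  congr 1
  apply Finset.prod_congr rfl
  intro i _
  rw [pow_add]
  ring

lemma qPoch_sq (y q : ℂ) (n : ℕ) :
    qPoch (y^2) (q^2) n = qPoch y q n * qPoch (-y) q n := by
  unfold qPoch
  rw [← Finset.prod_mul_distrib]
  apply Finset.prod_congr rfl
  intro i _
  ring

lemma qPoch_ne_zero (a q : ℂ) (n : ℕ) (h : ∀ i : ℕ, (1:ℂ) - a * q ^ i ≠ 0) :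
    qPoch a q n ≠ 0 :=
  Finset.prod_ne_zero_iff.mpr (fun i _ => h i)
noncomputable def auxF (q y : ℂ) (n k : ℕ) : ℂ :=
  q ^ k * qPoch (y * q ^ n) q k / qPoch (q ^ 2) (q ^ 2) k

noncomputable def auxG (q y : ℂ) (n k : ℕ) : ℂ :=
  q * y ^ 2 * q ^ (2*n) * (1 - q ^ (2*k)) * auxF q y n k / (1 - y * q ^ n)

noncomputable def auxg (q y : ℂ) (k : ℕ) : ℂ :=
  q ^ k * qPoch (y / q) q (2 * k) / (qPoch (q ^ 2) (q ^ 2) k * qPoch (y ^ 2) (q ^ 2) k)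

noncomputable def auxL (q y : ℂ) (n : ℕ) : ℂ := ∑ k ∈ Finset.range (n+1), auxF q y n k

noncomputable def auxM (q y : ℂ) (n : ℕ) : ℂ :=
  qPoch (-y) q n * ∑ k ∈ Finset.range (n+1), auxg q y k

lemma ratio1 (q y : ℂ) (n k : ℕ) :
    (1 - y * q ^ n) * qPoch (y * q ^ (n+1)) q k
      = qPoch (y * q ^ n) q k * (1 - y * q ^ (n+k)) := by
  rw [show y * q ^ (n+1) = (y * q ^ n) * q by ring, ← qPoch_succ', qPoch_succ]
  ring

lemma cert (q y : ℂ) (hqp : ∀ m : ℕ, (1:ℂ) - q ^ (m+1) ≠ 0)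
    (hys : ∀ m : ℕ, (1:ℂ) - y * q ^ m ≠ 0) (n k : ℕ) :
    q * (1 + y * q ^ n) * auxF q y n k
      - (1 + q - q^2 * y^2 * q^(2*n)) * auxF q y (n+1) k
      + (1 - y * q ^ (n+1)) * auxF q y (n+2) k
      = auxG q y n (k+1) - auxG q y n k := by
  have hZfac : ∀ m : ℕ, (1:ℂ) - q^2 * (q^2)^m ≠ 0 := by
    intro m
    have : (1:ℂ) - q^2 * (q^2)^m = 1 - q^(2*m+1+1) := by ring
    rw [this]; exact hqp (2*m+1)
  have hZ : qPoch (q^2) (q^2) k ≠ 0 := qPoch_ne_zero _ _ _ hZfac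
  have e1 : qPoch (y * q ^ (n+1)) q k
      = qPoch (y * q ^ n) q k * (1 - y * q ^ (n+k)) / (1 - y * q ^ n) := by
    rw [eq_div_iff (hys n)]
    linear_combination ratio1 q y n k
  have e2 : qPoch (y * q ^ (n+2)) q k
      = qPoch (y * q ^ (n+1)) q k * (1 - y * q ^ (n+1+k)) / (1 - y * q ^ (n+1)) := by
    rw [eq_div_iff (hys (n+1))]
    have := ratio1 q y (n+1) k
    linear_combination this
  unfold auxG auxF
  rw [e2, e1, qPoch_succ (y * q ^ n) q k, qPoch_succ (q^2) (q^2) k]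
  have h1 := hys n
  have h2 := hys (n+1)
  have h3 := hZfac k
  field_simp
  ring
lemma sumCert (q y : ℂ) (hqp : ∀ m : ℕ, (1:ℂ) - q ^ (m+1) ≠ 0)
    (hys : ∀ m : ℕ, (1:ℂ) - y * q ^ m ≠ 0) (n N : ℕ) :
    q * (1 + y * q ^ n) * (∑ k ∈ Finset.range (N+1), auxF q y n k)
      - (1 + q - q^2 * y^2 * q^(2*n)) * (∑ k ∈ Finset.range (N+1), auxF q y (n+1) k)
      + (1 - y * q ^ (n+1)) * (∑ k ∈ Finset.range (N+1), auxF q y (n+2) k)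
      = auxG q y n (N+1) := by
  rw [Finset.mul_sum, Finset.mul_sum, Finset.mul_sum, ← Finset.sum_sub_distrib,
    ← Finset.sum_add_distrib]
  rw [Finset.sum_congr rfl (fun k _ => cert q y hqp hys n k)]
  rw [Finset.sum_range_sub (auxG q y n) (N+1)]
  norm_num [auxG]

lemma Lrec (q y : ℂ) (hqp : ∀ m : ℕ, (1:ℂ) - q ^ (m+1) ≠ 0)
    (hys : ∀ m : ℕ, (1:ℂ) - y * q ^ m ≠ 0) (n : ℕ) :
    q * (1 + y * q ^ n) * auxL q y n
      - (1 + q - q^2 * y^2 * q^(2*n)) * auxL q y (n+1)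
      + (1 - y * q ^ (n+1)) * auxL q y (n+2)
      = auxG q y n (n+1)
        - (1 + q - q^2 * y^2 * q^(2*n)) * auxF q y (n+1) (n+1)
        + (1 - y * q ^ (n+1)) * (auxF q y (n+2) (n+1) + auxF q y (n+2) (n+2)) := by
  have e1 : auxL q y (n+1)
      = (∑ k ∈ Finset.range (n+1), auxF q y (n+1) k) + auxF q y (n+1) (n+1) := by
    simp [auxL, Finset.sum_range_succ]
  have e2 : auxL q y (n+2)
      = (∑ k ∈ Finset.range (n+1), auxF q y (n+2) k)
        + auxF q y (n+2) (n+1) + auxF q y (n+2) (n+2) := by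
    simp [auxL, Finset.sum_range_succ]
  rw [e1, e2, show auxL q y n = ∑ k ∈ Finset.range (n+1), auxF q y n k from rfl]
  linear_combination sumCert q y hqp hys n n

lemma Mstep (q y : ℂ) (n : ℕ) :
    auxM q y (n+1) = (1 + y * q ^ n) * auxM q y n
      + qPoch (-y) q (n+1) * auxg q y (n+1) := by
  unfold auxM
  rw [Finset.sum_range_succ, qPoch_succ]
  ring
set_option maxHeartbeats 1600000 in
lemma star (q y : ℂ) (hq : q ≠ 0) (hqp : ∀ m : ℕ, (1:ℂ) - q ^ (m+1) ≠ 0)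
    (hys : ∀ m : ℕ, (1:ℂ) - y * q ^ m ≠ 0)
    (hya : ∀ m : ℕ, (1:ℂ) + y * q ^ m ≠ 0) (n : ℕ) :
    auxG q y n (n+1)
      - (1 + q - q^2 * y^2 * q^(2*n)) * auxF q y (n+1) (n+1)
      + (1 - y * q ^ (n+1)) * (auxF q y (n+2) (n+1) + auxF q y (n+2) (n+2))
    = -q * (qPoch (-y) q (n+1) * auxg q y (n+1))
      + (1 - y * q ^ (n+1)) * (qPoch (-y) q (n+2) * auxg q y (n+2)) := by
  have hyan : ∀ m : ℕ, (1:ℂ) - -y * q ^ m ≠ 0 := by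
    intro m h
    exact hya m (by linear_combination h)
  have hZfac : ∀ m : ℕ, (1:ℂ) - q^2 * (q^2)^m ≠ 0 := by
    intro m
    have : (1:ℂ) - q^2 * (q^2)^m = 1 - q^(2*m+1+1) := by ring
    rw [this]; exact hqp (2*m+1)
  have hD1 : (1:ℂ) - q^(2*n+2) ≠ 0 := hqp (2*n+1)
  have hD2 : (1:ℂ) - q^(2*n+4) ≠ 0 := hqp (2*n+3)
  have hZ : qPoch (q^2) (q^2) n ≠ 0 := qPoch_ne_zero _ _ _ hZfac
  have hYn : qPoch y q n ≠ 0 := qPoch_ne_zero _ _ _ (fun i => by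
    have := hys i; simpa using this)
  have hNn : qPoch (-y) q n ≠ 0 := qPoch_ne_zero _ _ _ hyan
  have hZs : qPoch (q^2) (q^2) (n+1) = qPoch (q^2) (q^2) n * (1 - q^(2*n+2)) := by
    rw [qPoch_succ]; congr 2; ring
  have hZs2 : qPoch (q^2) (q^2) (n+2) = qPoch (q^2) (q^2) n * (1 - q^(2*n+2)) * (1 - q^(2*n+4)) := by
    rw [qPoch_succ, hZs]; congr 2; ring
  have hA : qPoch (y * q ^ n) q (n+1) = (1 - y * q ^ n) * qPoch (y * q ^ (n+1)) q n := by
    rw [qPoch_succ' (y * q ^ n) q n, show y * q ^ n * q = y * q ^ (n+1) by ring]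
  have hB : (1 - y * q ^ (n+1)) * qPoch (y * q ^ (n+2)) q (n+1)
      = qPoch (y * q ^ (n+1)) q n * (1 - y * q ^ (2*n+1)) * (1 - y * q ^ (2*n+2)) := by
    have h := qPoch_succ' (y * q ^ (n+1)) q (n+1)
    rw [show y * q ^ (n+1) * q = y * q ^ (n+2) by ring] at h
    rw [qPoch_succ (y * q ^ (n+1)) q (n+1), qPoch_succ (y * q ^ (n+1)) q n] at h
    linear_combination -h
  have hB' : qPoch (y * q ^ (n+2)) q (n+1)
      = qPoch (y * q ^ (n+1)) q n * (1 - y * q ^ (2*n+1)) * (1 - y * q ^ (2*n+2))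
        / (1 - y * q ^ (n+1)) := by
    rw [eq_div_iff (hys (n+1))]
    linear_combination hB
  have hB2 : qPoch (y * q ^ (n+2)) q (n+2)
      = qPoch (y * q ^ (n+1)) q n * (1 - y * q ^ (2*n+1)) * (1 - y * q ^ (2*n+2))
        * (1 - y * q ^ (2*n+3)) / (1 - y * q ^ (n+1)) := by
    rw [qPoch_succ (y * q ^ (n+2)) q (n+1), hB']
    field_simp
    ring
  have hC1 : qPoch (y/q) q (2*(n+1))
      = (1 - y/q) * qPoch y q (n+1) * qPoch (y * q ^ (n+1)) q n := by
    rw [show 2*(n+1) = (n+2)+n by ring, qPoch_add,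
      show y/q * q^(n+2) = y * q^(n+1) by field_simp; ring,
      qPoch_succ' (y/q) q (n+1), show y/q * q = y by field_simp]
  have hC2 : qPoch (y/q) q (2*(n+2))
      = (1 - y/q) * qPoch y q (n+2) * qPoch (y * q ^ (n+2)) q (n+1) := by
    rw [show 2*(n+2) = (n+3)+(n+1) by ring, qPoch_add,
      show y/q * q^(n+3) = y * q^(n+2) by field_simp; ring,
      qPoch_succ' (y/q) q (n+2), show y/q * q = y by field_simp]
  -- multiplied closed forms
  have u1 : auxG q y n (n+1) * qPoch (q^2) (q^2) n
      = q^(n+2) * y^2 * q^(2*n) * qPoch (y * q ^ (n+1)) q n := by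
    unfold auxG auxF
    rw [hA, hZs]
    have h1 := hys n
    field_simp
    ring
  have u2 : auxF q y (n+1) (n+1) * (qPoch (q^2) (q^2) n * (1 - q^(2*n+2)))
      = q^(n+1) * qPoch (y * q ^ (n+1)) q n * (1 - y * q^(2*n+1)) := by
    unfold auxF
    rw [qPoch_succ (y * q ^ (n+1)) q n, hZs]
    field_simp
    ring
  have u3 : auxF q y (n+2) (n+1)
        * (qPoch (q^2) (q^2) n * (1 - q^(2*n+2)) * (1 - y * q^(n+1)))
      = q^(n+1) * qPoch (y * q ^ (n+1)) q n * (1 - y * q^(2*n+1)) * (1 - y * q^(2*n+2)) := by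
    unfold auxF
    rw [hB', hZs]
    have h1 := hys (n+1)
    field_simp
    rw [div_eq_iff (by rwa [mul_comm] at h1)]
  have u4 : auxF q y (n+2) (n+2)
        * (qPoch (q^2) (q^2) n * (1 - q^(2*n+2)) * (1 - q^(2*n+4)) * (1 - y * q^(n+1)))
      = q^(n+2) * qPoch (y * q ^ (n+1)) q n * (1 - y * q^(2*n+1)) * (1 - y * q^(2*n+2))
        * (1 - y * q^(2*n+3)) := by
    unfold auxF
    rw [hB2, hZs2]
    have h1 := hys (n+1)
    field_simp
  have u5 : qPoch (-y) q (n+1) * auxg q y (n+1) * (qPoch (q^2) (q^2) n * (1 - q^(2*n+2))) * q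
      = q^(n+1) * (q - y) * qPoch (y * q ^ (n+1)) q n := by
    unfold auxg
    rw [hC1, qPoch_sq y q (n+1), hZs, qPoch_succ y q n, qPoch_succ (-y) q n]
    have h1 := hys n
    have h2 := hyan n
    field_simp
    rw [div_eq_iff (by simp only [← neg_mul]; apply_rules [mul_ne_zero, hq, hZ, hD1, hD2, hYn, hNn, hys, hya, hyan])]
    ring
  have u6 : qPoch (-y) q (n+2) * auxg q y (n+2)
        * (qPoch (q^2) (q^2) n * (1 - q^(2*n+2)) * (1 - q^(2*n+4)) * (1 - y * q^(n+1))) * q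
      = q^(n+2) * (q - y) * qPoch (y * q ^ (n+1)) q n * (1 - y * q^(2*n+1))
        * (1 - y * q^(2*n+2)) := by
    unfold auxg
    rw [hC2, qPoch_sq y q (n+2), hB', hZs2, qPoch_succ y q (n+1), qPoch_succ y q n,
      qPoch_succ (-y) q (n+1), qPoch_succ (-y) q n]
    have h1 := hys n
    have h2 := hys (n+1)
    have h3 := hyan n
    have h4 := hyan (n+1)
    field_simp
    rw [div_eq_iff (by simp only [← neg_mul]; apply_rules [mul_ne_zero, hq, hZ, hD1, hD2, hYn, hNn, hys, hya, hyan])]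
    ring
  -- assemble
  have hC : (q * (qPoch (q^2) (q^2) n * ((1 - q^(2*n+2)) * ((1 - q^(2*n+4)) * (1 - y*q^(n+1)))))) ≠ 0 :=
    mul_ne_zero hq (mul_ne_zero hZ (mul_ne_zero hD1 (mul_ne_zero hD2 (hys (n+1)))))
  apply mul_right_cancel₀ hC
  linear_combination
      (q*(1 - q^(2*n+2))*(1 - q^(2*n+4))*(1 - y*q^(n+1)))*u1
    - ((1 + q - q^2*y^2*q^(2*n))*q*(1 - q^(2*n+4))*(1 - y*q^(n+1)))*u2
    + ((1 - y*q^(n+1))*q*(1 - q^(2*n+4)))*u3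
    + ((1 - y*q^(n+1))*q)*u4
    + (q*(1 - q^(2*n+4))*(1 - y*q^(n+1)))*u5
    - (1 - y*q^(n+1))*u6
lemma baseZero (q y : ℂ) : auxL q y 0 = auxM q y 0 := by
  simp [auxL, auxM, auxF, auxg, qPoch]

lemma baseOne (q y : ℂ) (hq : q ≠ 0) (hqp : ∀ m : ℕ, (1:ℂ) - q ^ (m+1) ≠ 0)
    (hys : ∀ m : ℕ, (1:ℂ) - y * q ^ m ≠ 0)
    (hya : ∀ m : ℕ, (1:ℂ) + y * q ^ m ≠ 0) :
    auxL q y 1 = auxM q y 1 := by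
  have h2 : (1:ℂ) - q^2 ≠ 0 := by
    have := hqp 1; simpa using this
  have hy1 : (1:ℂ) - y ≠ 0 := by have := hys 0; simpa using this
  have hy2 : (1:ℂ) + y ≠ 0 := by have := hya 0; simpa using this
  simp only [auxL, auxM, auxF, auxg, Finset.sum_range_succ, Finset.sum_range_zero]
  norm_num [qPoch, Finset.prod_range_succ]
  have hfact : (1:ℂ) - q^2 + (q^2*y^2 - y^2) ≠ 0 := by
    intro h
    exact mul_ne_zero h2 (mul_ne_zero hy1 hy2) (by linear_combination h)
  have hy3 : (1:ℂ) - y^2 ≠ 0 := by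
    intro h
    exact mul_ne_zero hy1 hy2 (by linear_combination h)
  field_simp
  ring
lemma stepLemma (q y : ℂ) (hq : q ≠ 0) (hqp : ∀ m : ℕ, (1:ℂ) - q ^ (m+1) ≠ 0)
    (hys : ∀ m : ℕ, (1:ℂ) - y * q ^ m ≠ 0)
    (hya : ∀ m : ℕ, (1:ℂ) + y * q ^ m ≠ 0) (n : ℕ)
    (h1 : auxL q y n = auxM q y n) (h2 : auxL q y (n+1) = auxM q y (n+1)) :
    auxL q y (n+2) = auxM q y (n+2) := by
  have lr := Lrec q y hqp hys n
  have st := star q y hq hqp hys hya n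
  have ms1 := Mstep q y n
  have ms2 := Mstep q y (n+1)
  have key : (1 - y * q^(n+1)) * auxL q y (n+2) = (1 - y * q^(n+1)) * auxM q y (n+2) := by
    rw [show ((n:ℕ)+1+1) = n+2 from rfl] at ms2
    linear_combination lr + st - q*(1 + y*q^n)*h1 + (1 + q - q^2*y^2*q^(2*n))*h2
      - (1 - y*q^(n+1))*ms2 + q*ms1
  exact mul_left_cancel₀ (hys (n+1)) key

theorem stmt_5 (q y : ℂ) (n : ℕ) (hq0 : 0 < ‖q‖) (hq1 : ‖q‖ < 1)
    (hy : ∀ m : ℕ, y ≠ q ^ (-(m : ℤ)) ∧ y ≠ -q ^ (-(m : ℤ))) :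
    ∑ k ∈ Finset.range (n + 1), q ^ k * qPoch (y * q ^ n) q k / qPoch (q ^ 2) (q ^ 2) k =
    qPoch (-y) q n * ∑ k ∈ Finset.range (n + 1),
      q ^ k * qPoch (y / q) q (2 * k) /
        (qPoch (q ^ 2) (q ^ 2) k * qPoch (y ^ 2) (q ^ 2) k) := by
  have hq : q ≠ 0 := by
    intro h; rw [h] at hq0; simp at hq0
  have hqp : ∀ m : ℕ, (1:ℂ) - q ^ (m+1) ≠ 0 := by
    intro m h
    have hpow : q ^ (m+1) = 1 := by linear_combination -h
    have h1 : ‖q ^ (m+1)‖ = 1 := by rw [hpow, norm_one]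
    rw [norm_pow] at h1
    have h3 : ‖q‖ ^ (m+1) < 1 := pow_lt_one₀ (norm_nonneg q) hq1 (Nat.succ_ne_zero m)
    rw [h1] at h3
    exact lt_irrefl 1 h3
  have hys : ∀ m : ℕ, (1:ℂ) - y * q ^ m ≠ 0 := by
    intro m h
    apply (hy m).1
    have hm : q ^ m ≠ 0 := pow_ne_zero m hq
    have : y * q ^ m = 1 := by linear_combination -h
    rw [zpow_neg, zpow_natCast]
    field_simp
    linear_combination this
  have hya : ∀ m : ℕ, (1:ℂ) + y * q ^ m ≠ 0 := by
    intro m h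
    apply (hy m).2
    have hm : q ^ m ≠ 0 := pow_ne_zero m hq
    have : y * q ^ m = -1 := by linear_combination h
    rw [zpow_neg, zpow_natCast]
    field_simp
    linear_combination this
  have key : ∀ m : ℕ, auxL q y m = auxM q y m ∧ auxL q y (m+1) = auxM q y (m+1) := by
    intro m
    induction m with
    | zero => exact ⟨baseZero q y, baseOne q y hq hqp hys hya⟩
    | succ p ih => exact ⟨ih.2, stepLemma q y hq hqp hys hya p ih.1 ih.2⟩
  have := (key n).1
  simpa [auxL, auxM, auxF, auxg] using this
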